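/- Let E = {0,1}, fix ε ∈ (0, 1/2), and consider the Feynman–Kac model with G_n ≡ 1 and M_n(x, ·) = (1−ε)δ_x + ε δ_{1−x} for all n ≥ 1. Let x₀^{1:N} = (0, …, 0) ∈ E^N and x̃₀^{1:N} = (1, …, 1) ∈ E^N, and set δ_ε = 1/log((1−2ε)^{-2}). Then for any sequence (k(N))_{N≥1} of natural numbers such that δ_ε·log N − k(N) → ∞, we have ‖𝐌_{0,k(N)}(x₀^{1:N}, ·) − 𝐌_{0,k(N)}(x̃₀^{1:N}, ·)‖_TV → 1 as N → ∞. -/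

import Mathlib

open MeasureTheory ProbabilityTheory ENNReal Filter

noncomputable section

/-- Total variation distance between measures. -/
def tvDist {E : Type*} [MeasurableSpace E] (μ ν : Measure E) : ℝ :=
  ⨆ A : {s : Set E // MeasurableSet s}, |(μ A.1).toReal - (ν A.1).toReal|

/-- Dobrushin contraction coefficient of a Markov kernel. -/
def dobrushin {E : Type*} [MeasurableSpace E] (M : Kernel E E) : ℝ :=
  ⨆ x, ⨆ y, tvDist (M x) (M y)

/-- Boltzmann–Gibbs update Ψ. -/
def BG {E : Type*} [MeasurableSpace E] (G : E → ℝ) (μ : Measure E) : Measure E :=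
  (∫⁻ x, ENNReal.ofReal (G x) ∂μ)⁻¹ • μ.withDensity fun x => ENNReal.ofReal (G x)

/-- One-step map `Φ_j(μ) = Ψ_{j-1}(μ) M_j` (for `j ≥ 1`). -/
def Phi {E : Type*} [MeasurableSpace E] (G : ℕ → E → ℝ) (M : ℕ → Kernel E E)
    (j : ℕ) (μ : Measure E) : Measure E :=
  (BG (G (j - 1)) μ).bind (M j)

/-- Iterated map `Φ_{0,n}`. -/
def PhiComp {E : Type*} [MeasurableSpace E] (G : ℕ → E → ℝ) (M : ℕ → Kernel E E) :
    ℕ → Measure E → Measure E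
  | 0 => id
  | n + 1 => fun μ => Phi G M (n + 1) (PhiComp G M n μ)

/-- Empirical measure of `N` particles. -/
def empMeas {E : Type*} [MeasurableSpace E] {N : ℕ} (x : Fin N → E) : Measure E :=
  ((N : ℝ≥0∞))⁻¹ • ∑ i, Measure.dirac (x i)

/-- Reference-perturbed empirical measure (conditional particle filter). -/
def cEmp {E : Type*} [MeasurableSpace E] {N : ℕ} (xstar : E) (x : Fin N → E) : Measure E :=
  ((N : ℝ≥0∞) + 1)⁻¹ • (Measure.dirac xstar + ∑ i, Measure.dirac (x i))

/-- Composition of kernels `𝐌_{n,n+k} = 𝐌_{n+k} ∘ ⋯ ∘ 𝐌_{n+1}`. -/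
def kernelComp {α : Type*} [MeasurableSpace α] (K : ℕ → Kernel α α) (n : ℕ) :
    ℕ → Kernel α α
  | 0 => Kernel.id
  | k + 1 => (K (n + k + 1)).comp (kernelComp K n k)

/-- Perturbed Boltzmann–Gibbs update `Ψ̂`. -/
def hatBG {E : Type*} [MeasurableSpace E] (G : E → ℝ) (xstar : E) (N : ℕ) (μ : Measure E) :
    Measure E :=
  BG G (((N : ℝ≥0∞) + 1)⁻¹ • Measure.dirac xstar + ((N : ℝ≥0∞) / ((N : ℝ≥0∞) + 1)) • μ)

/-- `L^p` norm of a real random variable. -/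
def lpN {Ω : Type*} [MeasurableSpace Ω] (P : Measure Ω) (p : ℝ) (X : Ω → ℝ) : ℝ :=
  (∫ ω, |X ω| ^ p ∂P) ^ (1 / p)

/-- Oscillation of a real-valued function. -/
def osc {E : Type*} (f : E → ℝ) : ℝ := ⨆ x, ⨆ y, (f x - f y)

/-- Squared Hellinger distance with respect to a dominating measure `lam`. -/
def hellingerSq {E : Type*} [MeasurableSpace E] (lam P Q : Measure E) : ℝ :=
  1 - (∫⁻ x, (P.rnDeriv lam x * Q.rnDeriv lam x) ^ (1 / 2 : ℝ) ∂lam).toReal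

/-- `Qaux G m lam g k = Q_{k,k+g}`, defined through the densities `m` of the kernels. -/
def Qaux {E : Type*} [MeasurableSpace E] (G : ℕ → E → ℝ) (m : ℕ → E → E → ℝ)
    (lam : Measure E) : ℕ → ℕ → (E → ℝ) → E → ℝ
  | 0, _, φ => φ
  | g + 1, k, φ => fun x => G k x * ∫ y, m (k + 1) x y * Qaux G m lam g (k + 1) φ y ∂lam

end

noncomputable section
namespace TwoStateAux

/-! ### Bernoulli measures on `Fin 2` -/

def bern (p : ℝ) : Measure (Fin 2) :=
  ENNReal.ofReal (1 - p) • Measure.dirac 0 + ENNReal.ofReal p • Measure.dirac 1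

lemma bern_apply_zero (p : ℝ) : bern p {0} = ENNReal.ofReal (1 - p) := by
  simp [bern, Measure.dirac_apply, smul_eq_mul]

lemma bern_apply_one (p : ℝ) : bern p {1} = ENNReal.ofReal p := by
  simp [bern, Measure.dirac_apply, smul_eq_mul]

lemma bern_prob {p : ℝ} (h0 : 0 ≤ p) (h1 : p ≤ 1) : IsProbabilityMeasure (bern p) := by
  constructor
  simp only [bern, Measure.add_apply, Measure.smul_apply, smul_eq_mul]
  simp
  rw [← ENNReal.ofReal_add (by linarith) h0]
  norm_num

def v (b : Fin 2) : ℝ := ((b : ℕ) : ℝ)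

lemma v_zero : v 0 = 0 := by simp [v]
lemma v_one : v 1 = 1 := by simp [v]
lemma v_sq (b : Fin 2) : v b * v b = v b := by fin_cases b <;> simp [v]
lemma v_nonneg (b : Fin 2) : 0 ≤ v b := Nat.cast_nonneg _
lemma v_le_one (b : Fin 2) : v b ≤ 1 := by fin_cases b <;> norm_num [v]

lemma integral_bern {p : ℝ} (h0 : 0 ≤ p) (h1 : p ≤ 1) (f : Fin 2 → ℝ) :
    ∫ b, f b ∂(bern p) = (1 - p) * f 0 + p * f 1 := by
  haveI := bern_prob h0 h1
  rw [integral_fintype (Integrable.of_finite)]; simp only [measureReal_def]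
  rw [Fin.sum_univ_two, bern_apply_zero, bern_apply_one,
    ENNReal.toReal_ofReal (by linarith), ENNReal.toReal_ofReal h0]
  simp [smul_eq_mul]

lemma integral_bern_v {p : ℝ} (h0 : 0 ≤ p) (h1 : p ≤ 1) :
    ∫ b, v b ∂(bern p) = p := by
  rw [integral_bern h0 h1]; simp [v_zero, v_one]

/-! ### Moments under product Bernoulli measures -/

def Ppi (N : ℕ) (p : ℝ) : Measure (Fin N → Fin 2) := Measure.pi fun _ => bern p

lemma Ppi_prob {N : ℕ} {p : ℝ} (h0 : 0 ≤ p) (h1 : p ≤ 1) : IsProbabilityMeasure (Ppi N p) := by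
  haveI := bern_prob h0 h1
  exact MeasureTheory.Measure.pi.instIsProbabilityMeasure _

lemma integral_pi_prod {N : ℕ} {p : ℝ} (h0 : 0 ≤ p) (h1 : p ≤ 1) (f : Fin N → Fin 2 → ℝ) :
    ∫ x, ∏ i, f i (x i) ∂(Ppi N p) = ∏ i, ∫ b, f i b ∂(bern p) := by
  haveI := bern_prob h0 h1
  letI : MeasureSpace (Fin 2) := { volume := bern p }
  haveI : SigmaFinite (volume : Measure (Fin 2)) := by
    change SigmaFinite (bern p); infer_instance
  have h := MeasureTheory.integral_fintype_prod_eq_prod (𝕜 := ℝ) (ι := Fin N) (E := fun _ => Fin 2) f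
    (μ := fun _ => bern p)
  exact h

lemma prod_eq_single_aux {N : ℕ} (i : Fin N) (g : Fin N → ℝ) (h : ∀ j, j ≠ i → g j = 1) :
    ∏ j, g j = g i :=
  Finset.prod_eq_single_of_mem i (Finset.mem_univ i) (fun b _ hb => h b hb)

lemma prod_eq_pair_aux {N : ℕ} {i j : Fin N} (hij : i ≠ j) (g : Fin N → ℝ)
    (h : ∀ k, k ≠ i → k ≠ j → g k = 1) : ∏ k, g k = g i * g j := by
  rw [← Finset.prod_pair hij]
  refine (Finset.prod_subset (Finset.subset_univ _) fun k _ hk => ?_).symm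
  simp only [Finset.mem_insert, Finset.mem_singleton, not_or] at hk
  exact h k hk.1 hk.2

lemma integral_coord {N : ℕ} {p : ℝ} (h0 : 0 ≤ p) (h1 : p ≤ 1) (i : Fin N) :
    ∫ x, v (x i) ∂(Ppi N p) = p := by
  haveI := bern_prob h0 h1
  set f : Fin N → Fin 2 → ℝ := Function.update (fun _ _ => 1) i v with hf
  have h1' : ∀ x : Fin N → Fin 2, v (x i) = ∏ j, f j (x j) := by
    intro x
    rw [prod_eq_single_aux i (fun j => f j (x j))
      (fun j hj => by simp [hf, Function.update_of_ne hj])]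
    simp [hf]
  simp_rw [h1']
  rw [integral_pi_prod h0 h1]
  rw [prod_eq_single_aux i _ (fun j hj => by simp [hf, Function.update_of_ne hj])]
  simp [hf, integral_bern_v h0 h1]

lemma integral_coord_mul {N : ℕ} {p : ℝ} (h0 : 0 ≤ p) (h1 : p ≤ 1) {i j : Fin N} (hij : i ≠ j) :
    ∫ x, v (x i) * v (x j) ∂(Ppi N p) = p * p := by
  haveI := bern_prob h0 h1
  set f : Fin N → Fin 2 → ℝ := Function.update (Function.update (fun _ _ => 1) i v) j v with hf
  have hfi : f i = v := by rw [hf, Function.update_of_ne hij, Function.update_self]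
  have hfj : f j = v := by rw [hf, Function.update_self]
  have hfk : ∀ k, k ≠ i → k ≠ j → f k = fun _ => 1 := fun k hki hkj => by
    rw [hf, Function.update_of_ne hkj, Function.update_of_ne hki]
  have h1' : ∀ x : Fin N → Fin 2, v (x i) * v (x j) = ∏ k, f k (x k) := by
    intro x
    rw [prod_eq_pair_aux hij (fun k => f k (x k))
      (fun k hki hkj => by simp only [hfk k hki hkj])]
    rw [hfi, hfj]
  simp_rw [h1']
  rw [integral_pi_prod h0 h1]
  rw [prod_eq_pair_aux hij _ (fun k hki hkj => by rw [hfk k hki hkj]; simp)]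
  rw [hfi, hfj, integral_bern_v h0 h1]

def FF {N : ℕ} (x : Fin N → Fin 2) : ℝ := (∑ i, v (x i)) / N

lemma FF_nonneg {N : ℕ} (x : Fin N → Fin 2) : 0 ≤ FF x := by
  apply div_nonneg _ (Nat.cast_nonneg _)
  exact Finset.sum_nonneg fun i _ => Nat.cast_nonneg _

lemma FF_le_one {N : ℕ} (hN : 1 ≤ N) (x : Fin N → Fin 2) : FF x ≤ 1 := by
  rw [FF, div_le_one (by positivity)]
  calc ∑ i, v (x i) ≤ ∑ _i : Fin N, (1:ℝ) :=
        Finset.sum_le_sum fun i _ => v_le_one _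
    _ = N := by rw [Finset.sum_const, Finset.card_univ, Fintype.card_fin, nsmul_eq_mul, mul_one]

lemma integral_FF {N : ℕ} (hN : 1 ≤ N) {p : ℝ} (h0 : 0 ≤ p) (h1 : p ≤ 1) :
    ∫ x, FF x ∂(Ppi N p) = p := by
  haveI := Ppi_prob (N := N) h0 h1
  have hNne : (N : ℝ) ≠ 0 := Nat.cast_ne_zero.mpr (by omega)
  unfold FF
  rw [integral_div, integral_finset_sum _ (fun i _ => Integrable.of_finite)]
  simp_rw [integral_coord h0 h1]
  rw [Finset.sum_const, Finset.card_univ, Fintype.card_fin]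
  rw [nsmul_eq_mul]; field_simp

lemma integral_FF_sq {N : ℕ} (hN : 1 ≤ N) {p : ℝ} (h0 : 0 ≤ p) (h1 : p ≤ 1) :
    ∫ x, FF x ^ 2 ∂(Ppi N p) = p ^ 2 + p * (1 - p) / N := by
  haveI := Ppi_prob (N := N) h0 h1
  have hNne : (N : ℝ) ≠ 0 := Nat.cast_ne_zero.mpr (by omega)
  have hsq : ∀ x : Fin N → Fin 2, FF x ^ 2 = (∑ i, ∑ j, v (x i) * v (x j)) / (N * N) := by
    intro x
    rw [← Finset.sum_mul_sum]
    rw [FF, div_pow, sq, sq]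
  simp_rw [hsq]
  rw [integral_div, integral_finset_sum _ (fun i _ => Integrable.of_finite)]
  have hinner : ∀ i : Fin N, ∫ x, ∑ j, v (x i) * v (x j) ∂(Ppi N p)
      = p + (N - 1) * (p * p) := by
    intro i
    rw [integral_finset_sum _ (fun j _ => Integrable.of_finite)]
    have hterm : ∀ j : Fin N, (∫ x, v (x i) * v (x j) ∂(Ppi N p))
        = (p * p) + (if j = i then p - p * p else 0) := by
      intro j
      by_cases hji : j = i
      · subst hji
        simp_rw [v_sq]
        rw [integral_coord h0 h1]
        norm_num
      · rw [integral_coord_mul h0 h1 (Ne.symm hji), if_neg hji]; ring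
    simp_rw [hterm]
    rw [Finset.sum_add_distrib, Finset.sum_const, Finset.card_univ, Fintype.card_fin,
      Finset.sum_ite_eq' Finset.univ i (fun _ => p - p * p), if_pos (Finset.mem_univ i)]
    ring
  simp_rw [hinner]
  rw [Finset.sum_const, Finset.card_univ, Fintype.card_fin]
  field_simp
  ring

/-! ### Integration against `Measure.bind` on finite spaces, Chebyshev -/

lemma bind_prob {Ω : Type*} [Fintype Ω] [MeasurableSpace Ω] [MeasurableSingletonClass Ω]
    (μ : Measure Ω) [IsProbabilityMeasure μ] (κ : Ω → Measure Ω)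
    (hκ : ∀ x, IsProbabilityMeasure (κ x)) : IsProbabilityMeasure (μ.bind κ) := by
  have hκm : Measurable κ := measurable_of_finite _
  constructor
  rw [Measure.bind_apply MeasurableSet.univ hκm.aemeasurable]
  calc ∫⁻ x, κ x Set.univ ∂μ = ∫⁻ _, 1 ∂μ := by
        refine lintegral_congr fun x => ?_
        haveI := hκ x; simp
    _ = 1 := by simp

lemma integral_bind_fin {Ω : Type*} [Fintype Ω] [MeasurableSpace Ω] [MeasurableSingletonClass Ω]
    (μ : Measure Ω) [IsProbabilityMeasure μ] (κ : Ω → Measure Ω)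
    (hκ : ∀ x, IsProbabilityMeasure (κ x)) (g : Ω → ℝ) :
    ∫ y, g y ∂(μ.bind κ) = ∫ x, ∫ y, g y ∂(κ x) ∂μ := by
  have hκm : Measurable κ := measurable_of_finite _
  have hba : ∀ y : Ω, (μ.bind κ) {y} = ∑ x, κ x {y} * μ {x} := by
    intro y
    rw [Measure.bind_apply (measurableSet_singleton y) hκm.aemeasurable, lintegral_fintype]
  haveI : IsFiniteMeasure (μ.bind κ) := by haveI := bind_prob μ κ hκ; infer_instance
  have hinner : ∀ x, ∫ y, g y ∂(κ x) = ∑ y, ((κ x) {y}).toReal • g y := by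
    intro x; haveI := hκ x; exact integral_fintype Integrable.of_finite
  rw [integral_fintype Integrable.of_finite, integral_fintype Integrable.of_finite]
  simp only [measureReal_def]
  simp_rw [hinner, hba, Finset.smul_sum, smul_eq_mul]
  rw [Finset.sum_comm]
  refine Finset.sum_congr rfl fun y _ => ?_
  have hne : ∀ x ∈ Finset.univ, κ x {y} * μ {x} ≠ ⊤ := fun x _ =>
    ENNReal.mul_ne_top (haveI := hκ x; measure_ne_top _ _) (measure_ne_top _ _)
  rw [ENNReal.toReal_sum hne, Finset.sum_mul]
  refine Finset.sum_congr rfl fun x _ => ?_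
  rw [ENNReal.toReal_mul]; ring

lemma cheb {Ω : Type*} [Fintype Ω] [MeasurableSpace Ω] [MeasurableSingletonClass Ω]
    (μ : Measure Ω) [IsProbabilityMeasure μ] (X : Ω → ℝ) {c : ℝ} (hc : 0 < c) :
    (μ {ω | c ≤ |X ω - ∫ x, X x ∂μ|}).toReal
      ≤ (∫ x, X x ^ 2 ∂μ - (∫ x, X x ∂μ) ^ 2) / c ^ 2 := by
  have hX : MemLp X 2 μ := MemLp.of_discrete
  have h := meas_ge_le_variance_div_sq hX hc
  have hv : variance X μ = ∫ x, X x ^ 2 ∂μ - (∫ x, X x ∂μ) ^ 2 := by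
    rw [variance_eq_sub hX]
    congr 1
  rw [hv] at h
  have h0 : 0 ≤ ∫ x, X x ^ 2 ∂μ - (∫ x, X x ∂μ) ^ 2 := hv ▸ variance_nonneg X μ
  calc (μ {ω | c ≤ |X ω - ∫ x, X x ∂μ|}).toReal
      ≤ (ENNReal.ofReal ((∫ x, X x ^ 2 ∂μ - (∫ x, X x ∂μ) ^ 2) / c ^ 2)).toReal :=
        ENNReal.toReal_mono ENNReal.ofReal_ne_top h
    _ = _ := ENNReal.toReal_ofReal (by positivity)

end TwoStateAux
end

noncomputable section
namespace TwoStateAux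

/-! ### The one-step particle filter measure is a Bernoulli product -/

lemma empMeas_univ {N : ℕ} (hN : 1 ≤ N) (x : Fin N → Fin 2) :
    IsProbabilityMeasure (empMeas x) := by
  constructor
  simp only [empMeas, Measure.smul_apply, smul_eq_mul, Measure.finset_sum_apply]
  simp only [Measure.dirac_apply_of_mem (Set.mem_univ _)]
  rw [Finset.sum_const, Finset.card_univ, Fintype.card_fin, nsmul_eq_mul, mul_one]
  exact ENNReal.inv_mul_cancel (by exact_mod_cast Nat.cast_ne_zero.mpr (by omega)) (by simp)

lemma BG_one {E : Type*} [MeasurableSpace E] (μ : Measure E) [IsProbabilityMeasure μ] :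
    BG (fun _ => (1 : ℝ)) μ = μ := by
  simp [BG]

variable {ε : ℝ} (hε : ε ∈ Set.Ioo (0 : ℝ) (1 / 2))
  {Mker : ℕ → Kernel (Fin 2) (Fin 2)}
  (hMker : ∀ j (x : Fin 2),
      (Mker j) x = ENNReal.ofReal (1 - ε) • Measure.dirac x
        + ENNReal.ofReal ε • Measure.dirac (1 - x))

include hε hMker in
lemma Phi_emp {N : ℕ} (hN : 1 ≤ N) (j : ℕ) (x : Fin N → Fin 2) :
    Phi (fun _ _ => (1 : ℝ)) Mker j (empMeas x) = bern (ε + (1 - 2*ε) * FF x) := by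
  obtain ⟨hε0, hε2⟩ := hε
  haveI := empMeas_univ hN x
  have hNR : (0:ℝ) < N := by exact_mod_cast Nat.pos_of_ne_zero (by omega)
  have hr : (0:ℝ) ≤ 1 - 2*ε := by linarith
  rw [Phi, BG_one]
  refine Measure.ext_of_singleton fun a => ?_
  rw [Measure.bind_apply (measurableSet_singleton a) (Kernel.measurable (Mker j)).aemeasurable]
  rw [empMeas, lintegral_smul_measure, lintegral_finset_sum_measure]
  simp_rw [lintegral_dirac]
  have hNinv : ((N : ℝ≥0∞))⁻¹ = ENNReal.ofReal (1 / (N:ℝ)) := by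
    rw [one_div, ENNReal.ofReal_inv_of_pos hNR, ENNReal.ofReal_natCast]
  have h01 : a = 0 ∨ a = 1 := by fin_cases a <;> simp
  rcases h01 with rfl | rfl
  · have hterm : ∀ b : Fin 2, (Mker j) b {0} = ENNReal.ofReal ((1 - ε) - (1 - 2*ε) * v b) := by
      intro b
      rw [hMker j b]
      fin_cases b <;>
        simp [Measure.dirac_apply, smul_eq_mul, v] <;> congr 1 <;> ring
    simp_rw [hterm]
    rw [← ENNReal.ofReal_sum_of_nonneg (fun i _ => by
      nlinarith [v_nonneg (x i), v_le_one (x i)])]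
    rw [hNinv, smul_eq_mul, ← ENNReal.ofReal_mul (by positivity), bern_apply_zero]
    congr 1
    rw [Finset.sum_sub_distrib, Finset.sum_const, Finset.card_univ, Fintype.card_fin,
      ← Finset.mul_sum, FF]
    field_simp
    ring
  · have hterm : ∀ b : Fin 2, (Mker j) b {1} = ENNReal.ofReal (ε + (1 - 2*ε) * v b) := by
      intro b
      rw [hMker j b]
      fin_cases b <;>
        simp [Measure.dirac_apply, smul_eq_mul, v] <;> congr 1 <;> ring
    simp_rw [hterm]
    rw [← ENNReal.ofReal_sum_of_nonneg (fun i _ => by nlinarith [v_nonneg (x i)])]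
    rw [hNinv, smul_eq_mul, ← ENNReal.ofReal_mul (by positivity), bern_apply_one]
    congr 1
    rw [Finset.sum_add_distrib, Finset.sum_const, Finset.card_univ, Fintype.card_fin,
      ← Finset.mul_sum, FF]
    field_simp
    ring

/-! ### Mean and variance of `FF` along the particle filter chain -/

variable {K : (N : ℕ) → ℕ → Kernel (Fin N → Fin 2) (Fin N → Fin 2)}
  (hK : ∀ (N : ℕ) (j : ℕ), 1 ≤ j → ∀ x,
      (K N j) x = Measure.pi fun _ : Fin N =>
        Phi (fun _ _ => (1 : ℝ)) Mker j (empMeas x))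
  {N : ℕ} (hN : 1 ≤ N)

include hε hMker hK hN in
lemma chain_facts (k : ℕ) (s : Fin N → Fin 2) :
    IsProbabilityMeasure (kernelComp (K N) 0 k s) ∧
    (∫ y, FF y ∂(kernelComp (K N) 0 k s)) = 1/2 + (1-2*ε)^k * (FF s - 1/2) ∧
    (∫ y, FF y ^ 2 ∂(kernelComp (K N) 0 k s)) - (∫ y, FF y ∂(kernelComp (K N) 0 k s))^2
      ≤ 1/(4*N*(1-(1-2*ε)^2)) := by
  obtain ⟨hε0, hε2⟩ := hε
  have hNR : (0:ℝ) < N := by exact_mod_cast Nat.pos_of_ne_zero (by omega)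
  have hr0 : (0:ℝ) < 1-2*ε := by linarith
  have h1r2 : (0:ℝ) < 1-(1-2*ε)^2 := by nlinarith
  have hKx : ∀ j, 1 ≤ j → ∀ x, (K N j) x = Ppi N (ε + (1-2*ε) * FF x) := by
    intro j hj x
    rw [hK N j hj x]
    unfold Ppi
    congr 1
    funext _
    exact Phi_emp ⟨hε0, hε2⟩ hMker hN j x
  have hp0 : ∀ x : Fin N → Fin 2, 0 ≤ ε + (1-2*ε) * FF x := fun x => by
    nlinarith [FF_nonneg x]
  have hp1 : ∀ x : Fin N → Fin 2, ε + (1-2*ε) * FF x ≤ 1 := fun x => by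
    nlinarith [FF_le_one hN x]
  induction k with
  | zero =>
    have h0 : kernelComp (K N) 0 0 s = Measure.dirac s := by
      show Kernel.id s = _
      rw [Kernel.id_apply]
    rw [h0]
    refine ⟨by infer_instance, ?_, ?_⟩
    · rw [integral_dirac]; ring
    · rw [integral_dirac, integral_dirac, sub_self]; positivity
  | succ k IH =>
    obtain ⟨IHP, IHm, IHv⟩ := IH
    haveI := IHP
    have hstep : kernelComp (K N) 0 (k+1) s = (kernelComp (K N) 0 k s).bind (K N (k+1)) := by
      show ((K N (0+k+1)).comp (kernelComp (K N) 0 k)) s = _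
      rw [Kernel.comp_apply, Nat.zero_add]
    have hκ : ∀ x, IsProbabilityMeasure ((K N (k+1)) x) := fun x => by
      rw [hKx (k+1) (by omega) x]; exact Ppi_prob (hp0 x) (hp1 x)
    have hPm : IsProbabilityMeasure (kernelComp (K N) 0 (k+1) s) := by
      rw [hstep]; exact bind_prob _ _ hκ
    have hinner1 : ∀ x, ∫ y, FF y ∂((K N (k+1)) x) = ε + (1-2*ε) * FF x := fun x => by
      rw [hKx (k+1) (by omega) x]; exact integral_FF hN (hp0 x) (hp1 x)
    have hinner2 : ∀ x, ∫ y, FF y ^ 2 ∂((K N (k+1)) x)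
        = (ε + (1-2*ε) * FF x)^2 + (ε + (1-2*ε) * FF x) * (1 - (ε + (1-2*ε) * FF x)) / N :=
      fun x => by rw [hKx (k+1) (by omega) x]; exact integral_FF_sq hN (hp0 x) (hp1 x)
    have hmean : ∫ y, FF y ∂(kernelComp (K N) 0 (k+1) s)
        = ε + (1-2*ε) * ∫ y, FF y ∂(kernelComp (K N) 0 k s) := by
      rw [hstep, integral_bind_fin _ _ hκ]
      simp_rw [hinner1]
      rw [integral_add (integrable_const _) Integrable.of_finite, integral_const,
        integral_const_mul]
      simp
    refine ⟨hPm, ?_, ?_⟩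
    · rw [hmean, IHm]; ring
    · have hS : ∫ y, FF y ^ 2 ∂(kernelComp (K N) 0 (k+1) s)
          ≤ ε^2 + 1/(4*N) + 2*ε*(1-2*ε) * (∫ y, FF y ∂(kernelComp (K N) 0 k s))
            + (1-2*ε)^2 * (∫ y, FF y ^ 2 ∂(kernelComp (K N) 0 k s)) := by
        rw [hstep, integral_bind_fin _ _ hκ]
        simp_rw [hinner2]
        have hmono : ∫ x, ((ε + (1-2*ε) * FF x)^2
              + (ε + (1-2*ε) * FF x) * (1 - (ε + (1-2*ε) * FF x)) / N)
                ∂(kernelComp (K N) 0 k s)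
            ≤ ∫ x, (ε^2 + 1/(4*N) + 2*ε*(1-2*ε) * FF x + (1-2*ε)^2 * FF x ^ 2)
                ∂(kernelComp (K N) 0 k s) := by
          apply integral_mono Integrable.of_finite Integrable.of_finite
          intro x
          have h1 := hp0 x
          have h2 := hp1 x
          have h3 : (ε + (1-2*ε) * FF x) * (1 - (ε + (1-2*ε) * FF x)) / N ≤ 1/(4*N) := by
            rw [div_le_div_iff₀ hNR (by positivity)]
            nlinarith [sq_nonneg (2*(ε + (1-2*ε) * FF x) - 1), hNR]
          nlinarith [h3]
        refine hmono.trans (le_of_eq ?_)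
        rw [integral_add (by exact Integrable.of_finite) Integrable.of_finite,
          integral_add (by exact integrable_const _) Integrable.of_finite,
          integral_const, integral_const_mul, integral_const_mul]
        simp
      have hhint : (1-2*ε)^2 * ((∫ y, FF y ^ 2 ∂(kernelComp (K N) 0 k s))
            - (∫ y, FF y ∂(kernelComp (K N) 0 k s))^2)
          ≤ (1-2*ε)^2 * (1/(4*N*(1-(1-2*ε)^2))) :=
        mul_le_mul_of_nonneg_left IHv (by positivity)
      have hB : (1-2*ε)^2 * (1/(4*(N:ℝ)*(1-(1-2*ε)^2))) + 1/(4*N)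
          = 1/(4*N*(1-(1-2*ε)^2)) := by
        field_simp
        ring
      rw [hmean]
      nlinarith [hS, hhint, hB]

end TwoStateAux
end

noncomputable section
namespace TwoStateAux

lemma main_bound {ε : ℝ} (hε : ε ∈ Set.Ioo (0 : ℝ) (1 / 2))
    {Mker : ℕ → Kernel (Fin 2) (Fin 2)}
    (hMker : ∀ j (x : Fin 2),
      (Mker j) x = ENNReal.ofReal (1 - ε) • Measure.dirac x
        + ENNReal.ofReal ε • Measure.dirac (1 - x))
    {K : (N : ℕ) → ℕ → Kernel (Fin N → Fin 2) (Fin N → Fin 2)}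
    (hK : ∀ (N : ℕ) (j : ℕ), 1 ≤ j → ∀ x,
      (K N j) x = Measure.pi fun _ : Fin N =>
        Phi (fun _ _ => (1 : ℝ)) Mker j (empMeas x))
    {N : ℕ} (hN : 1 ≤ N) (k : ℕ) :
    (1 - (2/(1-(1-2*ε)^2)) / (N * (1-2*ε)^(2*k))
      ≤ tvDist ((kernelComp (K N) 0 k) (fun _ : Fin N => (0 : Fin 2)))
               ((kernelComp (K N) 0 k) (fun _ : Fin N => (1 : Fin 2)))) ∧
    tvDist ((kernelComp (K N) 0 k) (fun _ : Fin N => (0 : Fin 2)))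
           ((kernelComp (K N) 0 k) (fun _ : Fin N => (1 : Fin 2))) ≤ 1 := by
  obtain ⟨hε0, hε2⟩ := hε
  have hNR : (0:ℝ) < N := by exact_mod_cast Nat.pos_of_ne_zero (by omega)
  have hr0 : (0:ℝ) < 1-2*ε := by linarith
  have h1r2 : (0:ℝ) < 1-(1-2*ε)^2 := by nlinarith
  obtain ⟨P0, m0, V0⟩ := chain_facts ⟨hε0, hε2⟩ hMker hK hN k (fun _ => 0)
  obtain ⟨P1, m1, V1⟩ := chain_facts ⟨hε0, hε2⟩ hMker hK hN k (fun _ => 1)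
  haveI := P0; haveI := P1
  set μ0 := (kernelComp (K N) 0 k) (fun _ : Fin N => (0 : Fin 2)) with hμ0
  set μ1 := (kernelComp (K N) 0 k) (fun _ : Fin N => (1 : Fin 2)) with hμ1
  have hFF0 : FF (fun _ : Fin N => (0 : Fin 2)) = 0 := by
    rw [FF]
    simp [v_zero]
  have hFF1 : FF (fun _ : Fin N => (1 : Fin 2)) = 1 := by
    rw [FF]
    simp only [v_one]
    rw [Finset.sum_const, Finset.card_univ, Fintype.card_fin, nsmul_eq_mul, mul_one]
    field_simp
  have hm0 : (∫ y, FF y ∂μ0) = 1/2 - (1-2*ε)^k/2 := by rw [m0, hFF0]; ring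
  have hm1 : (∫ y, FF y ∂μ1) = 1/2 + (1-2*ε)^k/2 := by rw [m1, hFF1]; ring
  have hdpos : (0:ℝ) < (1-2*ε)^k/2 := by positivity
  set A : Set (Fin N → Fin 2) := {y | FF y < 1/2} with hA
  have hAmeas : MeasurableSet A := .of_discrete
  -- Chebyshev for μ0 on Aᶜ
  have hsub0 : Aᶜ ⊆ {y | (1-2*ε)^k/2 ≤ |FF y - ∫ x, FF x ∂μ0|} := by
    intro y hy
    simp only [hA, Set.mem_compl_iff, Set.mem_setOf_eq, not_lt] at hy
    simp only [Set.mem_setOf_eq]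
    rw [hm0, le_abs]
    left; linarith
  have hcheb0 : (μ0 Aᶜ).toReal
      ≤ (1/(4*N*(1-(1-2*ε)^2))) / ((1-2*ε)^k/2)^2 := by
    calc (μ0 Aᶜ).toReal
        ≤ (μ0 {y | (1-2*ε)^k/2 ≤ |FF y - ∫ x, FF x ∂μ0|}).toReal :=
          ENNReal.toReal_mono (measure_ne_top _ _) (measure_mono hsub0)
      _ ≤ ((∫ x, FF x ^ 2 ∂μ0) - (∫ x, FF x ∂μ0)^2) / ((1-2*ε)^k/2)^2 := cheb μ0 FF hdpos
      _ ≤ (1/(4*N*(1-(1-2*ε)^2))) / ((1-2*ε)^k/2)^2 := by gcongr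
  have hsub1 : A ⊆ {y | (1-2*ε)^k/2 ≤ |FF y - ∫ x, FF x ∂μ1|} := by
    intro y hy
    simp only [hA, Set.mem_setOf_eq] at hy
    simp only [Set.mem_setOf_eq]
    rw [hm1, le_abs]
    right; linarith
  have hcheb1 : (μ1 A).toReal ≤ (1/(4*N*(1-(1-2*ε)^2))) / ((1-2*ε)^k/2)^2 := by
    calc (μ1 A).toReal
        ≤ (μ1 {y | (1-2*ε)^k/2 ≤ |FF y - ∫ x, FF x ∂μ1|}).toReal :=
          ENNReal.toReal_mono (measure_ne_top _ _) (measure_mono hsub1)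
      _ ≤ ((∫ x, FF x ^ 2 ∂μ1) - (∫ x, FF x ∂μ1)^2) / ((1-2*ε)^k/2)^2 := cheb μ1 FF hdpos
      _ ≤ (1/(4*N*(1-(1-2*ε)^2))) / ((1-2*ε)^k/2)^2 := by gcongr
  have hcompl : (μ0 A).toReal + (μ0 Aᶜ).toReal = 1 := by
    rw [← ENNReal.toReal_add (measure_ne_top _ _) (measure_ne_top _ _),
      measure_add_measure_compl hAmeas, measure_univ, ENNReal.toReal_one]
  -- bounds on the supremum
  have habs : ∀ s : Set (Fin N → Fin 2), |(μ0 s).toReal - (μ1 s).toReal| ≤ 1 := by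
    intro s
    have t0 : (μ0 s).toReal ≤ 1 := by
      calc (μ0 s).toReal ≤ (μ0 Set.univ).toReal :=
            ENNReal.toReal_mono (measure_ne_top _ _) (measure_mono (Set.subset_univ s))
        _ = 1 := by rw [measure_univ, ENNReal.toReal_one]
    have t1 : (μ1 s).toReal ≤ 1 := by
      calc (μ1 s).toReal ≤ (μ1 Set.univ).toReal :=
            ENNReal.toReal_mono (measure_ne_top _ _) (measure_mono (Set.subset_univ s))
        _ = 1 := by rw [measure_univ, ENNReal.toReal_one]
    rw [abs_le]
    constructor
    · linarith [ENNReal.toReal_nonneg (a := μ0 s), ENNReal.toReal_nonneg (a := μ1 s)]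
    · linarith [ENNReal.toReal_nonneg (a := μ0 s), ENNReal.toReal_nonneg (a := μ1 s)]
  haveI : Nonempty {s : Set (Fin N → Fin 2) // MeasurableSet s} := ⟨⟨∅, MeasurableSet.empty⟩⟩
  have hbdd : BddAbove (Set.range fun A : {s : Set (Fin N → Fin 2) // MeasurableSet s} =>
      |(μ0 A.1).toReal - (μ1 A.1).toReal|) := by
    refine ⟨1, ?_⟩
    rintro z ⟨s, rfl⟩
    exact habs s.1
  have hupper : tvDist μ0 μ1 ≤ 1 := ciSup_le fun s => habs s.1
  have hlower : |(μ0 A).toReal - (μ1 A).toReal| ≤ tvDist μ0 μ1 :=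
    le_ciSup hbdd (⟨A, hAmeas⟩ : {s : Set (Fin N → Fin 2) // MeasurableSet s})
  refine ⟨?_, hupper⟩
  have hpow : (1-2*ε)^(2*k) = (1-2*ε)^k * (1-2*ε)^k := by rw [show 2*k = k + k from by ring, pow_add]
  have heq : (2/(1-(1-2*ε)^2)) / ((N:ℝ) * (1-2*ε)^(2*k))
      = 2 * ((1/(4*N*(1-(1-2*ε)^2))) / ((1-2*ε)^k/2)^2) := by
    rw [hpow]
    have hk0 : (1-2*ε)^k ≠ 0 := by positivity
    field_simp
    ring
  rw [heq]
  have := le_abs_self ((μ0 A).toReal - (μ1 A).toReal)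
  linarith

end TwoStateAux
end

/-- Theorem `simpler-example`: in the two-state model with flip
probability `ε ∈ (0,1/2)` and unit potentials, if `δ_ε log N - k(N) → ∞` with
`δ_ε = 1/log((1-2ε)⁻²)`, then the total variation between the laws of the particle filter
started from all-zeros and from all-ones at time `k(N)` tends to `1`. -/
theorem two_state_no_forgetting (ε : ℝ) (hε : ε ∈ Set.Ioo (0 : ℝ) (1 / 2))
    (Mker : ℕ → Kernel (Fin 2) (Fin 2))
    (hMker : ∀ j (x : Fin 2),
      (Mker j) x = ENNReal.ofReal (1 - ε) • Measure.dirac x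
        + ENNReal.ofReal ε • Measure.dirac (1 - x))
    (K : (N : ℕ) → ℕ → Kernel (Fin N → Fin 2) (Fin N → Fin 2))
    (hK : ∀ (N : ℕ) (j : ℕ), 1 ≤ j → ∀ x,
      (K N j) x = Measure.pi fun _ : Fin N =>
        Phi (fun _ _ => (1 : ℝ)) Mker j (empMeas x))
    (kk : ℕ → ℕ)
    (hkk : Tendsto
      (fun N : ℕ => (1 / Real.log (((1 - 2 * ε) ^ 2)⁻¹)) * Real.log N - (kk N : ℝ))
      atTop atTop) :
    Tendsto
      (fun N : ℕ => tvDist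
        ((kernelComp (K N) 0 (kk N)) (fun _ : Fin N => (0 : Fin 2)))
        ((kernelComp (K N) 0 (kk N)) (fun _ : Fin N => (1 : Fin 2))))
      atTop (nhds 1) := by
  
  classical
  obtain ⟨hε0, hε2⟩ := hε
  have hr0 : (0:ℝ) < 1 - 2*ε := by linarith
  have hr1 : 1 - 2*ε < 1 := by linarith
  have h1r2 : (0:ℝ) < 1 - (1-2*ε)^2 := by nlinarith
  set L : ℝ := Real.log (((1 - 2 * ε) ^ 2)⁻¹) with hLdef
  have hr2pos : (0:ℝ) < (1 - 2*ε)^2 := by positivity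
  have hr2lt : (1 - 2*ε)^2 < 1 := by nlinarith
  have hL : 0 < L := Real.log_pos ((one_lt_inv₀ hr2pos).2 hr2lt)
  have hLval : L = -Real.log ((1 - 2*ε)^2) := Real.log_inv _
  have htendexp : Tendsto (fun N : ℕ => L * ((1/L) * Real.log N - (kk N : ℝ)))
      atTop atTop := Tendsto.const_mul_atTop hL hkk
  have hprod : Tendsto (fun N : ℕ => (N:ℝ) * (1-2*ε)^(2*kk N)) atTop atTop := by
    apply Tendsto.congr' _ (Real.tendsto_exp_atTop.comp htendexp)
    filter_upwards [eventually_ge_atTop 1] with N hN1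
    have hNR : (0:ℝ) < N := by exact_mod_cast Nat.pos_of_ne_zero (by omega)
    show Real.exp (L * ((1/L) * Real.log N - kk N)) = (N:ℝ) * (1-2*ε)^(2*kk N)
    have hexparg : L * ((1/L) * Real.log N - kk N)
        = Real.log N + (kk N : ℝ) * Real.log ((1 - 2*ε)^2) := by
      have hLne : L ≠ 0 := hL.ne'
      have h1 : L * ((1/L) * Real.log N) = Real.log N := by
        field_simp
      have h2 : L * (kk N : ℝ) = -((kk N : ℝ) * Real.log ((1 - 2*ε)^2)) := by
        rw [hLval]; ring
      calc L * ((1/L) * Real.log N - kk N)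
          = L * ((1/L) * Real.log N) - L * (kk N : ℝ) := by ring
        _ = Real.log N + (kk N : ℝ) * Real.log ((1 - 2*ε)^2) := by rw [h1, h2]; ring
    rw [hexparg, Real.exp_add, Real.exp_log hNR, ← Real.log_pow,
      Real.exp_log (by positivity), ← pow_mul]
  have hlim0 : Tendsto (fun N : ℕ =>
      (2/(1-(1-2*ε)^2)) / ((N:ℝ) * (1-2*ε)^(2*kk N))) atTop (nhds 0) :=
    Tendsto.div_atTop tendsto_const_nhds hprod
  have hg : Tendsto (fun N : ℕ =>
      1 - (2/(1-(1-2*ε)^2)) / ((N:ℝ) * (1-2*ε)^(2*kk N))) atTop (nhds 1) := by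
    have := (tendsto_const_nhds (x := (1:ℝ)) (f := atTop (α := ℕ))).sub hlim0
    simpa using this
  apply tendsto_of_tendsto_of_tendsto_of_le_of_le' hg
    (tendsto_const_nhds (x := (1:ℝ)) (f := atTop (α := ℕ)))
  · filter_upwards [eventually_ge_atTop 1] with N hN1
    exact (TwoStateAux.main_bound ⟨hε0, hε2⟩ hMker hK hN1 (kk N)).1
  · filter_upwards [eventually_ge_atTop 1] with N hN1
    exact (TwoStateAux.main_bound ⟨hε0, hε2⟩ hMker hK hN1 (kk N)).2
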